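/- Let q > 1, let f : [0,1] → ℝ be Lebesgue-integrable, and let n ≥ 1 be an integer. Define g_n(x) := 2^{-n} Σ_{j=0}^{2^n − 1} ∫_0^1 ( f((x+j)/2^n) − f((y+j)/2^n) ) dy for x ∈ [0,1]. Then ∫_0^1 |g_n(x)|^q dx ≤ 2^n ∫_0^1 ∫_0^1 1_{|x−y| ≤ 2^{-n}} |f(x) − f(y)|^q dx dy. (This is the conditional expectation E[f∘T^n | ℳ] for the Bernoulli shift with ℳ = σ(ε_i, i ≤ 0), and the bound follows from Jensen's inequality.) -/

import Mathlib

open MeasureTheory Filter Topology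
open scoped ENNReal NNReal

noncomputable section

private lemma jensen_lint {μ : Measure ℝ} [IsProbabilityMeasure μ] {g : ℝ → ℝ≥0∞}
    (hg : AEMeasurable g μ) {q : ℝ} (hq : 1 < q) :
    (∫⁻ y, g y ∂μ) ^ q ≤ ∫⁻ y, g y ^ q ∂μ := by
  have hq0 : (0:ℝ) < q := lt_trans one_pos hq
  have hpq := Real.HolderConjugate.conjExponent hq
  have h := ENNReal.lintegral_mul_le_Lp_mul_Lq μ hpq hg
    (aemeasurable_const (b := (1:ℝ≥0∞)))
  simp only [Pi.mul_apply, mul_one, ENNReal.one_rpow, lintegral_const, measure_univ,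
    ENNReal.one_rpow, one_mul, ENNReal.one_rpow, mul_one] at h
  calc (∫⁻ y, g y ∂μ) ^ q ≤ ((∫⁻ y, g y ^ q ∂μ) ^ (1/q)) ^ q :=
        ENNReal.rpow_le_rpow h hq0.le
    _ = ∫⁻ y, g y ^ q ∂μ := by
        rw [← ENNReal.rpow_mul, one_div, inv_mul_cancel₀ hq0.ne', ENNReal.rpow_one]

private lemma cov_lint {g : ℝ → ℝ≥0∞} (hg : Measurable g) {c : ℝ} (hc : 0 < c) (d : ℝ)
    {s : Set ℝ} (hs : MeasurableSet s) :
    ∫⁻ y in (fun y : ℝ => c⁻¹ * y + d) ⁻¹' s, g (c⁻¹ * y + d) =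
      ENNReal.ofReal c * ∫⁻ u in s, g u := by
  have hT : Measure.map (fun y : ℝ => c⁻¹ * y + d) volume = ENNReal.ofReal c • volume := by
    have h1 : (fun y : ℝ => c⁻¹ * y + d) = (fun z : ℝ => z + d) ∘ (fun y : ℝ => c⁻¹ * y) := rfl
    rw [h1, ← Measure.map_map (measurable_add_const d) (measurable_const_mul _),
      Real.map_volume_mul_left (inv_ne_zero hc.ne'), Measure.map_smul,
      map_add_right_eq_self volume d, inv_inv, abs_of_pos hc]
  rw [← setLIntegral_map hs hg (by fun_prop), hT, Measure.restrict_smul,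
    lintegral_smul_measure, smul_eq_mul]

/-- change of variables specialized to the dyadic intervals -/
private lemma cov_dyadic {g : ℝ → ℝ≥0∞} (hg : Measurable g) {c : ℝ} (hc : 0 < c) (j : ℕ) :
    ∫⁻ y in Set.Icc (0:ℝ) 1, g ((y + j) / c) =
      ENNReal.ofReal c * ∫⁻ u in Set.Icc ((j:ℝ)/c) (((j:ℝ)+1)/c), g u := by
  have hpre : (fun y : ℝ => c⁻¹ * y + (j:ℝ)/c) ⁻¹' Set.Icc ((j:ℝ)/c) (((j:ℝ)+1)/c)
      = Set.Icc (0:ℝ) 1 := by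
    ext y
    simp only [Set.mem_preimage, Set.mem_Icc]
    have hci : (0:ℝ) < c⁻¹ := inv_pos.mpr hc
    have key : ((j:ℝ)+1)/c = (j:ℝ)/c + c⁻¹ := by rw [add_div, one_div]
    constructor
    · rintro ⟨h1, h2⟩
      refine ⟨?_, ?_⟩
      · have h1' : c⁻¹ * 0 ≤ c⁻¹ * y := by rw [mul_zero]; linarith
        exact (mul_le_mul_iff_right₀ hci).mp h1'
      · have h2' : c⁻¹ * y ≤ c⁻¹ * 1 := by rw [mul_one]; rw [key] at h2; linarith
        exact (mul_le_mul_iff_right₀ hci).mp h2'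
    · rintro ⟨h1, h2⟩
      have h3 := mul_le_mul_of_nonneg_left h2 hci.le
      have h4 := mul_nonneg hci.le h1
      rw [mul_one] at h3
      exact ⟨by linarith, by rw [key]; linarith⟩
  have := cov_lint hg hc ((j:ℝ)/c) (measurableSet_Icc
      (a := (j:ℝ)/c) (b := ((j:ℝ)+1)/c))
  rw [hpre] at this
  rw [← this]
  apply lintegral_congr
  intro y
  congr 1
  field_simp

theorem stmt17 (q : ℝ) (hq : 1 < q)
    (f : ℝ → ℝ) (hfmeas : Measurable f)
    (hfint : IntegrableOn f (Set.Icc (0 : ℝ) 1))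
    (n : ℕ) (hn : 1 ≤ n) :
    (∫⁻ x in Set.Icc (0 : ℝ) 1,
        ENNReal.ofReal
          (|((2 : ℝ) ^ n)⁻¹ * ∑ j ∈ Finset.range (2 ^ n),
              ∫ y in Set.Icc (0 : ℝ) 1,
                (f ((x + j) / 2 ^ n) - f ((y + j) / 2 ^ n))| ^ q)) ≤
      ENNReal.ofReal ((2 : ℝ) ^ n) *
        ∫⁻ x in Set.Icc (0 : ℝ) 1, ∫⁻ y in Set.Icc (0 : ℝ) 1,
          (if |x - y| ≤ ((2 : ℝ) ^ n)⁻¹ then ENNReal.ofReal (|f x - f y| ^ q) else 0) := by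
  have hq0 : (0:ℝ) < q := lt_trans one_pos hq
  set I : Set ℝ := Set.Icc 0 1 with hI
  set c : ℝ := (2:ℝ)^n with hc0
  have hc : 0 < c := by positivity
  set N : ℕ := 2^n with hNdef
  have hNc : (N:ℝ) = c := by rw [hNdef, hc0]; push_cast; ring
  clear_value I c N
  set F : ℝ → ℝ → ℝ≥0∞ := fun u v => ENNReal.ofReal (|f u - f v| ^ q) with hF
  clear_value F
  have hFm : Measurable (fun p : ℝ × ℝ => F p.1 p.2) := by
    rw [hF]
    exact Measurable.ennreal_ofReal ((Real.continuous_rpow_const hq0.le).measurable.comp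
      (((hfmeas.comp measurable_fst).sub (hfmeas.comp measurable_snd)).abs))
  set S : ℕ → ℝ → ℝ := fun j x => ∫ y in I, (f ((x + j)/c) - f ((y + j)/c)) with hS
  clear_value S
  set w : ℝ≥0∞ := ENNReal.ofReal c⁻¹ with hw
  have hwc : w * ENNReal.ofReal c = 1 := by
    rw [hw, ← ENNReal.ofReal_mul (inv_nonneg.mpr hc.le), inv_mul_cancel₀ hc.ne',
      ENNReal.ofReal_one]
  have hw1 : ∑ _j ∈ Finset.range N, w = 1 := by
    rw [Finset.sum_const, Finset.card_range, nsmul_eq_mul]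
    have : ((N:ℕ) : ℝ≥0∞) = ENNReal.ofReal c := by
      rw [← hNc]; simp [ENNReal.ofReal_natCast]
    rw [this, mul_comm]; exact hwc
  set G : ℕ → ℝ → ℝ≥0∞ := fun j x => ∫⁻ y in I, F ((x + j)/c) ((y + j)/c) with hG
  clear_value G
  have hGm : ∀ j : ℕ, Measurable (G j) := by
    intro j
    rw [hG]
    have hg2 : Measurable (fun p : ℝ × ℝ => (((p.1 + j)/c), ((p.2 + j)/c))) := by fun_prop
    have h1 : Measurable (fun p : ℝ × ℝ => F ((p.1 + j)/c) ((p.2 + j)/c)) :=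
      hFm.comp hg2
    exact h1.lintegral_prod_right'
  haveI : IsProbabilityMeasure (volume.restrict I) := by
    constructor
    rw [Measure.restrict_apply_univ, hI, Real.volume_Icc]
    norm_num
  -- pointwise bound
  have hpt : ∀ x : ℝ, ENNReal.ofReal (|c⁻¹ * ∑ j ∈ Finset.range N, S j x| ^ q)
      ≤ ∑ j ∈ Finset.range N, w * G j x := by
    intro x
    rw [← ENNReal.ofReal_rpow_of_nonneg (abs_nonneg _) hq0.le]
    have habs : |c⁻¹ * ∑ j ∈ Finset.range N, S j x| ≤ c⁻¹ * ∑ j ∈ Finset.range N, |S j x| := by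
      rw [abs_mul, abs_of_nonneg (inv_nonneg.mpr hc.le)]
      exact mul_le_mul_of_nonneg_left (Finset.abs_sum_le_sum_abs _ _)
        (inv_nonneg.mpr hc.le)
    have key : ∀ j, (ENNReal.ofReal |S j x|) ^ q ≤ G j x := by
      intro j
      have hmeas : Measurable fun y => f ((x + j)/c) - f ((y + j)/c) := by fun_prop
      have hSb : ENNReal.ofReal |S j x|
          ≤ ∫⁻ y in I, ENNReal.ofReal |f ((x + j)/c) - f ((y + j)/c)| := by
        have h1 : |S j x| ≤ ∫ y in I, |f ((x + j)/c) - f ((y + j)/c)| := by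
          simp only [hS]
          simpa [Real.norm_eq_abs] using
            norm_integral_le_integral_norm (μ := volume.restrict I)
              (f := fun y => f ((x + j)/c) - f ((y + j)/c))
        refine le_trans (ENNReal.ofReal_le_ofReal h1) ?_
        rw [integral_eq_lintegral_of_nonneg_ae (ae_of_all _ fun y => abs_nonneg _)
          hmeas.abs.aestronglyMeasurable]
        exact ENNReal.ofReal_toReal_le
      calc (ENNReal.ofReal |S j x|) ^ q
          ≤ (∫⁻ y in I, ENNReal.ofReal |f ((x + j)/c) - f ((y + j)/c)|) ^ q :=
            ENNReal.rpow_le_rpow hSb hq0.le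
        _ ≤ ∫⁻ y in I, (ENNReal.ofReal |f ((x + j)/c) - f ((y + j)/c)|) ^ q :=
            jensen_lint (by fun_prop) hq
        _ = G j x := by
            simp only [hG, hF]
            exact lintegral_congr fun y => ENNReal.ofReal_rpow_of_nonneg (abs_nonneg _) hq0.le
    calc (ENNReal.ofReal |c⁻¹ * ∑ j ∈ Finset.range N, S j x|) ^ q
        ≤ (ENNReal.ofReal (c⁻¹ * ∑ j ∈ Finset.range N, |S j x|)) ^ q :=
          ENNReal.rpow_le_rpow (ENNReal.ofReal_le_ofReal habs) hq0.le
      _ = (∑ j ∈ Finset.range N, w * ENNReal.ofReal |S j x|) ^ q := by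
          rw [ENNReal.ofReal_mul (inv_nonneg.mpr hc.le),
            ENNReal.ofReal_sum_of_nonneg (fun j _ => abs_nonneg _), Finset.mul_sum]
      _ ≤ ∑ j ∈ Finset.range N, w * (ENNReal.ofReal |S j x|) ^ q :=
          ENNReal.rpow_arith_mean_le_arith_mean_rpow _ _ _ hw1 hq.le
      _ ≤ ∑ j ∈ Finset.range N, w * G j x :=
          Finset.sum_le_sum fun j _ => mul_le_mul_right (key j) w
  have hpt' : ∀ x : ℝ, ENNReal.ofReal
      (|c⁻¹ * ∑ j ∈ Finset.range N, ∫ y in I, (f ((x + j)/c) - f ((y + j)/c))| ^ q)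
      ≤ ∑ j ∈ Finset.range N, w * G j x := by
    intro x
    have := hpt x
    rw [hS] at this
    exact this
  have hIccsub : ∀ j ∈ Finset.range N, Set.Icc ((j:ℝ)/c) (((j:ℝ)+1)/c) ⊆ I := by
    intro j hj
    rw [hI]
    refine Set.Icc_subset_Icc (by positivity) ?_
    have hjN : ((j:ℝ)+1) ≤ c := by
      rw [← hNc]
      have : (j+1 : ℕ) ≤ N := Finset.mem_range.mp hj
      exact_mod_cast this
    exact (div_le_one hc).mpr hjN
  have hitem : Measurable (fun p : ℝ × ℝ => if |p.1 - p.2| ≤ c⁻¹ then F p.1 p.2 else 0) := by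
    refine Measurable.ite ?_ hFm measurable_const
    exact measurableSet_le ((measurable_fst.sub measurable_snd).abs) measurable_const
  have hKm : Measurable (fun u : ℝ => ∫⁻ v in I, if |u - v| ≤ c⁻¹ then F u v else 0) :=
    hitem.lintegral_prod_right'
  have hCG : ∀ j : ℕ, ∫⁻ x in I, G j x = ENNReal.ofReal c * (ENNReal.ofReal c *
      ∫⁻ u in Set.Icc ((j:ℝ)/c) (((j:ℝ)+1)/c),
        ∫⁻ v in Set.Icc ((j:ℝ)/c) (((j:ℝ)+1)/c), F u v) := by
    intro j
    have hHm : Measurable (fun u : ℝ => ∫⁻ v in Set.Icc ((j:ℝ)/c) (((j:ℝ)+1)/c), F u v) :=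
      hFm.lintegral_prod_right'
    have hstep1 : ∀ x : ℝ, G j x =
        ENNReal.ofReal c * (fun u : ℝ => ∫⁻ v in Set.Icc ((j:ℝ)/c) (((j:ℝ)+1)/c), F u v)
          ((x + j)/c) := by
      intro x
      rw [hG, hI]
      have hgm : Measurable (fun v : ℝ => F ((x + j)/c) v) :=
        hFm.comp (measurable_const.prodMk measurable_id)
      exact cov_dyadic hgm hc j
    calc ∫⁻ x in I, G j x
        = ∫⁻ x in I, ENNReal.ofReal c *
            (fun u : ℝ => ∫⁻ v in Set.Icc ((j:ℝ)/c) (((j:ℝ)+1)/c), F u v) ((x + j)/c) :=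
          lintegral_congr fun x => hstep1 x
      _ = ENNReal.ofReal c * ∫⁻ x in I,
            (fun u : ℝ => ∫⁻ v in Set.Icc ((j:ℝ)/c) (((j:ℝ)+1)/c), F u v) ((x + j)/c) :=
          lintegral_const_mul' _ _ ENNReal.ofReal_ne_top
      _ = ENNReal.ofReal c * (ENNReal.ofReal c *
            ∫⁻ u in Set.Icc ((j:ℝ)/c) (((j:ℝ)+1)/c),
              ∫⁻ v in Set.Icc ((j:ℝ)/c) (((j:ℝ)+1)/c), F u v) := by
          rw [hI]
          exact congrArg (fun z => ENNReal.ofReal c * z) (cov_dyadic hHm hc j)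
  have hDb : ∀ j ∈ Finset.range N,
      (∫⁻ u in Set.Icc ((j:ℝ)/c) (((j:ℝ)+1)/c),
        ∫⁻ v in Set.Icc ((j:ℝ)/c) (((j:ℝ)+1)/c), F u v)
      ≤ ∫⁻ u in Set.Icc ((j:ℝ)/c) (((j:ℝ)+1)/c),
          ∫⁻ v in I, if |u - v| ≤ c⁻¹ then F u v else 0 := by
    intro j hj
    refine setLIntegral_mono hKm ?_
    intro u hu
    have key : ((j:ℝ)+1)/c = (j:ℝ)/c + c⁻¹ := by rw [add_div, one_div]
    calc ∫⁻ v in Set.Icc ((j:ℝ)/c) (((j:ℝ)+1)/c), F u v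
        = ∫⁻ v in Set.Icc ((j:ℝ)/c) (((j:ℝ)+1)/c), (if |u - v| ≤ c⁻¹ then F u v else 0) := by
          refine (setLIntegral_congr_fun_ae measurableSet_Icc (ae_of_all _ fun v hv => ?_)).symm
          rw [if_pos]
          obtain ⟨hu1, hu2⟩ := hu
          obtain ⟨hv1, hv2⟩ := hv
          rw [key] at hu2 hv2
          rw [abs_sub_le_iff]
          exact ⟨by linarith, by linarith⟩
      _ ≤ ∫⁻ v in I, (if |u - v| ≤ c⁻¹ then F u v else 0) :=
          lintegral_mono' (Measure.restrict_mono (hIccsub j hj) le_rfl) le_rfl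
  have hd : (↑(Finset.range N) : Set ℕ).PairwiseDisjoint
      (fun j : ℕ => Set.Ico ((j:ℝ)/c) (((j:ℝ)+1)/c)) := by
    intro i _ j _ hij
    have main : ∀ i j : ℕ, i < j → Disjoint (Set.Ico ((i:ℝ)/c) (((i:ℝ)+1)/c))
        (Set.Ico ((j:ℝ)/c) (((j:ℝ)+1)/c)) := by
      intro i j h
      have hij' : ((i:ℝ)+1) ≤ (j:ℝ) := by
        have : (i+1 : ℕ) ≤ j := h
        exact_mod_cast this
      have hle : ((i:ℝ)+1)/c ≤ (j:ℝ)/c := by gcongr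
      exact Set.disjoint_left.mpr fun a hai haj =>
        absurd haj.1 (not_le.mpr (lt_of_lt_of_le hai.2 hle))
    rcases lt_or_gt_of_ne hij with h | h
    · exact main i j h
    · exact (main j i h).symm
  have hpt'' := fun x => hpt' x
  calc ∫⁻ x in I, ENNReal.ofReal
        (|c⁻¹ * ∑ j ∈ Finset.range N, ∫ y in I, (f ((x + j)/c) - f ((y + j)/c))| ^ q)
      ≤ ∫⁻ x in I, ∑ j ∈ Finset.range N, w * G j x := lintegral_mono hpt'
    _ = ∑ j ∈ Finset.range N, ∫⁻ x in I, w * G j x :=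
        lintegral_finset_sum' _ fun j _ => (((hGm j).const_mul w).aemeasurable)
    _ = ∑ j ∈ Finset.range N, w * ∫⁻ x in I, G j x :=
        Finset.sum_congr rfl fun j _ => lintegral_const_mul' _ _ (by rw [hw]; exact ENNReal.ofReal_ne_top)
    _ = ∑ j ∈ Finset.range N, w * (ENNReal.ofReal c * (ENNReal.ofReal c *
          ∫⁻ u in Set.Icc ((j:ℝ)/c) (((j:ℝ)+1)/c),
            ∫⁻ v in Set.Icc ((j:ℝ)/c) (((j:ℝ)+1)/c), F u v)) :=
        Finset.sum_congr rfl fun j _ => by rw [hCG j]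
    _ ≤ ∑ j ∈ Finset.range N, w * (ENNReal.ofReal c * (ENNReal.ofReal c *
          ∫⁻ u in Set.Icc ((j:ℝ)/c) (((j:ℝ)+1)/c),
            ∫⁻ v in I, if |u - v| ≤ c⁻¹ then F u v else 0)) := by
        refine Finset.sum_le_sum fun j hj => ?_
        exact mul_le_mul_right (mul_le_mul_right (mul_le_mul_right (hDb j hj) _) _) _
    _ = ENNReal.ofReal c * ∑ j ∈ Finset.range N,
          ∫⁻ u in Set.Icc ((j:ℝ)/c) (((j:ℝ)+1)/c),
            ∫⁻ v in I, if |u - v| ≤ c⁻¹ then F u v else 0 := by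
        rw [Finset.mul_sum]
        refine Finset.sum_congr rfl fun j _ => ?_
        rw [← mul_assoc w, hwc, one_mul]
    _ = ENNReal.ofReal c * ∑ j ∈ Finset.range N,
          ∫⁻ u in Set.Ico ((j:ℝ)/c) (((j:ℝ)+1)/c),
            ∫⁻ v in I, if |u - v| ≤ c⁻¹ then F u v else 0 := by
        congr 1
        refine Finset.sum_congr rfl fun j _ => ?_
        rw [← Measure.restrict_congr_set Ico_ae_eq_Icc]
    _ = ENNReal.ofReal c *
          ∫⁻ u in ⋃ j ∈ Finset.range N, Set.Ico ((j:ℝ)/c) (((j:ℝ)+1)/c),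
            ∫⁻ v in I, if |u - v| ≤ c⁻¹ then F u v else 0 := by
        rw [lintegral_biUnion_finset hd (fun b _ => measurableSet_Ico)]
    _ ≤ ENNReal.ofReal c * ∫⁻ u in I, ∫⁻ v in I, if |u - v| ≤ c⁻¹ then F u v else 0 := by
        refine mul_le_mul_right (lintegral_mono' (Measure.restrict_mono ?_ le_rfl) le_rfl) _
        exact Set.iUnion₂_subset fun j hj => Set.Ico_subset_Icc_self.trans (hIccsub j hj)
    _ = ENNReal.ofReal c * ∫⁻ x in I, ∫⁻ y in I,
          if |x - y| ≤ c⁻¹ then ENNReal.ofReal (|f x - f y| ^ q) else 0 := by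
        rw [hF]
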